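/- In the negative definite E8 lattice, the vectors v_1 = (1,-1,0,0,0,0,0,0) and v_2 = (0,1,3,0,0,0,0,0) span a sublattice with Gram matrix [[-2,1],[1,-10]], and the roots of E8 orthogonal to both v_1 and v_2 are exactly the 40 vectors δ_{±i,±j} with 4 ≤ i < j ≤ 8. -/
import Mathlib


/-- The `E₈` lattice: vectors in `ℚ⁸` with all coordinates integers or all
in `ℤ + 1/2`, and coordinate sum in `2ℤ`. -/
def IsE8 (x : Fin 8 → ℚ) : Prop :=
  ((∀ i, ∃ n : ℤ, x i = n) ∨ (∀ i, ∃ n : ℤ, x i = n + 1/2)) ∧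
    ∃ m : ℤ, (∑ i, x i) = 2 * m

/-- The (negative definite) bilinear form on the `E₈` model. -/
def e8bil (x y : Fin 8 → ℚ) : ℚ := -(∑ i, x i * y i)

/-- A root of `E₈` is a lattice vector of norm `-2`. -/
def IsE8Root (x : Fin 8 → ℚ) : Prop := IsE8 x ∧ e8bil x x = -2

/-- The `δ_{±i,±j}` with (1-based) `4 ≤ i < j ≤ 8`, i.e. supported in the last
five coordinates. -/
def deltaTail5 : Set (Fin 8 → ℚ) :=
  {x | ∃ j k : Fin 8, 3 ≤ (j : ℕ) ∧ 3 ≤ (k : ℕ) ∧ j ≠ k ∧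
    (x j = 1 ∨ x j = -1) ∧ (x k = 1 ∨ x k = -1) ∧ ∀ i, i ≠ j → i ≠ k → x i = 0}

/- ---------- auxiliary material ---------- -/

def sgnq (b : Bool) : ℚ := if b then 1 else -1

def gmap (p : Fin 8 × Fin 8 × Bool × Bool) : Fin 8 → ℚ :=
  fun i => if i = p.1 then sgnq p.2.2.1 else if i = p.2.1 then sgnq p.2.2.2 else 0

def deltaFinset : Finset (Fin 8 → ℚ) :=
  (Finset.univ.filter
    (fun p : Fin 8 × Fin 8 × Bool × Bool => 3 ≤ (p.1 : ℕ) ∧ p.1 < p.2.1)).image gmap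

lemma vec_tail_zero : ∀ i : Fin 8, 3 ≤ (i : ℕ) →
    (![1, -1, 0, 0, 0, 0, 0, 0] : Fin 8 → ℚ) i = 0 ∧
    (![0, 1, 3, 0, 0, 0, 0, 0] : Fin 8 → ℚ) i = 0 := by decide

set_option maxHeartbeats 4000000 in
lemma tail_mem (x : Fin 8 → ℚ) (a b c d e : ℤ)
    (h3 : x 3 = a) (h4 : x 4 = b) (h5 : x 5 = c) (h6 : x 6 = d) (h7 : x 7 = e)
    (h0 : x 0 = 0) (h1 : x 1 = 0) (h2 : x 2 = 0)
    (key : a*a + b*b + c*c + d*d + e*e = 2) : x ∈ deltaTail5 := by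
  have ba1 : -1 ≤ a := by nlinarith [mul_self_nonneg b, mul_self_nonneg c, mul_self_nonneg d, mul_self_nonneg e]
  have ba2 : a ≤ 1 := by nlinarith [mul_self_nonneg b, mul_self_nonneg c, mul_self_nonneg d, mul_self_nonneg e]
  have bb1 : -1 ≤ b := by nlinarith [mul_self_nonneg a, mul_self_nonneg c, mul_self_nonneg d, mul_self_nonneg e]
  have bb2 : b ≤ 1 := by nlinarith [mul_self_nonneg a, mul_self_nonneg c, mul_self_nonneg d, mul_self_nonneg e]
  have bc1 : -1 ≤ c := by nlinarith [mul_self_nonneg a, mul_self_nonneg b, mul_self_nonneg d, mul_self_nonneg e]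
  have bc2 : c ≤ 1 := by nlinarith [mul_self_nonneg a, mul_self_nonneg b, mul_self_nonneg d, mul_self_nonneg e]
  have bd1 : -1 ≤ d := by nlinarith [mul_self_nonneg a, mul_self_nonneg b, mul_self_nonneg c, mul_self_nonneg e]
  have bd2 : d ≤ 1 := by nlinarith [mul_self_nonneg a, mul_self_nonneg b, mul_self_nonneg c, mul_self_nonneg e]
  have be1 : -1 ≤ e := by nlinarith [mul_self_nonneg a, mul_self_nonneg b, mul_self_nonneg c, mul_self_nonneg d]
  have be2 : e ≤ 1 := by nlinarith [mul_self_nonneg a, mul_self_nonneg b, mul_self_nonneg c, mul_self_nonneg d]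
  interval_cases a <;> interval_cases b <;> interval_cases c <;> interval_cases d <;> interval_cases e <;>
    first
      | (exact absurd key (by decide))
      | (norm_num at h3 h4 h5 h6 h7
         first
           | (refine ⟨3, 4, ?_, ?_, ?_, ?_, ?_, ?_⟩ <;>
               first
                 | decide
                 | tauto
                 | (intro i hj hk; fin_cases i <;> simp_all))
           | (refine ⟨3, 5, ?_, ?_, ?_, ?_, ?_, ?_⟩ <;>
               first
                 | decide
                 | tauto
                 | (intro i hj hk; fin_cases i <;> simp_all))
           | (refine ⟨3, 6, ?_, ?_, ?_, ?_, ?_, ?_⟩ <;>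
               first
                 | decide
                 | tauto
                 | (intro i hj hk; fin_cases i <;> simp_all))
           | (refine ⟨3, 7, ?_, ?_, ?_, ?_, ?_, ?_⟩ <;>
               first
                 | decide
                 | tauto
                 | (intro i hj hk; fin_cases i <;> simp_all))
           | (refine ⟨4, 5, ?_, ?_, ?_, ?_, ?_, ?_⟩ <;>
               first
                 | decide
                 | tauto
                 | (intro i hj hk; fin_cases i <;> simp_all))
           | (refine ⟨4, 6, ?_, ?_, ?_, ?_, ?_, ?_⟩ <;>
               first
                 | decide
                 | tauto
                 | (intro i hj hk; fin_cases i <;> simp_all))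
           | (refine ⟨4, 7, ?_, ?_, ?_, ?_, ?_, ?_⟩ <;>
               first
                 | decide
                 | tauto
                 | (intro i hj hk; fin_cases i <;> simp_all))
           | (refine ⟨5, 6, ?_, ?_, ?_, ?_, ?_, ?_⟩ <;>
               first
                 | decide
                 | tauto
                 | (intro i hj hk; fin_cases i <;> simp_all))
           | (refine ⟨5, 7, ?_, ?_, ?_, ?_, ?_, ?_⟩ <;>
               first
                 | decide
                 | tauto
                 | (intro i hj hk; fin_cases i <;> simp_all))
           | (refine ⟨6, 7, ?_, ?_, ?_, ?_, ?_, ?_⟩ <;>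
               first
                 | decide
                 | tauto
                 | (intro i hj hk; fin_cases i <;> simp_all)))

lemma forward (x : Fin 8 → ℚ) (hE : IsE8 x) (hn : e8bil x x = -2)
    (h1 : e8bil x ![1, -1, 0, 0, 0, 0, 0, 0] = 0)
    (h2 : e8bil x ![0, 1, 3, 0, 0, 0, 0, 0] = 0) : x ∈ deltaTail5 := by
  obtain ⟨hcoord, -⟩ := hE
  have hs : x 0 * x 0 + x 1 * x 1 + x 2 * x 2 + x 3 * x 3 + x 4 * x 4 + x 5 * x 5
      + x 6 * x 6 + x 7 * x 7 = 2 := by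
    simp [e8bil, Fin.sum_univ_eight] at hn; linarith
  have e1 : x 0 = x 1 := by
    simp [e8bil, Fin.sum_univ_eight,
      show (![1,-1,0,0,0,0,0,0] : Fin 8 → ℚ) 5 = 0 from rfl,
      show (![1,-1,0,0,0,0,0,0] : Fin 8 → ℚ) 6 = 0 from rfl,
      show (![1,-1,0,0,0,0,0,0] : Fin 8 → ℚ) 7 = 0 from rfl] at h1
    linarith
  have e2 : x 1 + 3 * x 2 = 0 := by
    simp [e8bil, Fin.sum_univ_eight,
      show (![0,1,3,0,0,0,0,0] : Fin 8 → ℚ) 5 = 0 from rfl,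
      show (![0,1,3,0,0,0,0,0] : Fin 8 → ℚ) 6 = 0 from rfl,
      show (![0,1,3,0,0,0,0,0] : Fin 8 → ℚ) 7 = 0 from rfl] at h2
    linarith
  rcases hcoord with hint | hhalf
  · obtain ⟨n0, g0⟩ := hint 0
    obtain ⟨n1, g1⟩ := hint 1
    obtain ⟨n2, g2⟩ := hint 2
    obtain ⟨n3, g3⟩ := hint 3
    obtain ⟨n4, g4⟩ := hint 4
    obtain ⟨n5, g5⟩ := hint 5
    obtain ⟨n6, g6⟩ := hint 6
    obtain ⟨n7, g7⟩ := hint 7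
    rw [g0, g1, g2, g3, g4, g5, g6, g7] at hs
    rw [g0, g1] at e1
    rw [g1, g2] at e2
    have hsZ : n0*n0 + n1*n1 + n2*n2 + n3*n3 + n4*n4 + n5*n5 + n6*n6 + n7*n7 = 2 := by
      exact_mod_cast hs
    have e1Z : n0 = n1 := by exact_mod_cast e1
    have e2Z : n1 + 3 * n2 = 0 := by exact_mod_cast e2
    have hn2 : n2 = 0 := by
      by_contra hne
      have h9 : n1 * n1 = 9 * (n2 * n2) := by
        have hh : n1 = -3 * n2 := by omega
        rw [hh]; ring
      have hge : 1 ≤ n2 * n2 := by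
        rcases lt_or_gt_of_ne hne with h | h <;> nlinarith
      nlinarith [mul_self_nonneg n0, mul_self_nonneg n3, mul_self_nonneg n4,
        mul_self_nonneg n5, mul_self_nonneg n6, mul_self_nonneg n7]
    have hn1 : n1 = 0 := by omega
    have hn0 : n0 = 0 := by omega
    subst hn2 hn1 hn0
    refine tail_mem x n3 n4 n5 n6 n7 g3 g4 g5 g6 g7 ?_ ?_ ?_ ?_
    · rw [g0]; norm_num
    · rw [g1]; norm_num
    · rw [g2]; norm_num
    · linarith [hsZ]
  · exfalso
    have hq : ∀ i : Fin 8, (1/4 : ℚ) ≤ x i * x i := by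
      intro i
      obtain ⟨n, hn⟩ := hhalf i
      have hZ : (0:ℤ) ≤ n * n + n := by
        rcases le_or_gt 0 n with h | h
        · nlinarith
        · nlinarith
      have hQ : (0:ℚ) ≤ (n:ℚ) * (n:ℚ) + (n:ℚ) := by exact_mod_cast hZ
      rw [hn]; nlinarith
    have hx1 : x 1 * x 1 = 1/4 := by
      linarith [hq 0, hq 1, hq 2, hq 3, hq 4, hq 5, hq 6, hq 7]
    have hx2 : x 2 * x 2 = 1/4 := by
      linarith [hq 0, hq 1, hq 2, hq 3, hq 4, hq 5, hq 6, hq 7]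
    have h9 : x 1 * x 1 = 9 * (x 2 * x 2) := by
      have hh : x 1 = -3 * x 2 := by linarith
      rw [hh]; ring
    linarith

lemma backward (x : Fin 8 → ℚ) (hx : x ∈ deltaTail5) :
    IsE8Root x ∧ e8bil x ![1, -1, 0, 0, 0, 0, 0, 0] = 0 ∧
      e8bil x ![0, 1, 3, 0, 0, 0, 0, 0] = 0 := by
  obtain ⟨j, k, hj, hk, hjk, hxj, hxk, hz⟩ := hx
  have hsum : ∀ f : Fin 8 → ℚ, (∀ i, i ≠ j → i ≠ k → f i = 0) → ∑ i, f i = f j + f k := by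
    intro f hf
    rw [← Finset.sum_pair hjk]
    refine (Finset.sum_subset (Finset.subset_univ _) (fun i _ hi => ?_)).symm
    simp only [Finset.mem_insert, Finset.mem_singleton, not_or] at hi
    exact hf i hi.1 hi.2
  refine ⟨⟨⟨Or.inl ?_, ?_⟩, ?_⟩, ?_, ?_⟩
  · intro i
    by_cases h : i = j
    · subst h
      rcases hxj with h | h <;> rw [h]
      · exact ⟨1, by norm_num⟩
      · exact ⟨-1, by norm_num⟩
    by_cases h' : i = k
    · subst h'
      rcases hxk with h'' | h'' <;> rw [h'']
      · exact ⟨1, by norm_num⟩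
      · exact ⟨-1, by norm_num⟩
    · exact ⟨0, by rw [hz i h h']; norm_num⟩
  · have hxsum : ∑ i, x i = x j + x k := hsum x hz
    rw [hxsum]
    rcases hxj with h | h <;> rcases hxk with h' | h' <;> rw [h, h']
    exacts [⟨1, by norm_num⟩, ⟨0, by norm_num⟩, ⟨0, by norm_num⟩, ⟨-1, by norm_num⟩]
  · show e8bil x x = -2
    have hxsum : ∑ i, x i * x i = x j * x j + x k * x k :=
      hsum _ (fun i h h' => by rw [hz i h h']; ring)
    simp only [e8bil, hxsum]
    rcases hxj with h | h <;> rcases hxk with h' | h' <;> rw [h, h'] <;> norm_num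
  · simp only [e8bil, neg_eq_zero]
    apply Finset.sum_eq_zero
    intro i _
    by_cases h : i = j
    · subst h; rw [(vec_tail_zero i hj).1]; ring
    by_cases h' : i = k
    · subst h'; rw [(vec_tail_zero i hk).1]; ring
    · rw [hz i h h']; ring
  · simp only [e8bil, neg_eq_zero]
    apply Finset.sum_eq_zero
    intro i _
    by_cases h : i = j
    · subst h; rw [(vec_tail_zero i hj).2]; ring
    by_cases h' : i = k
    · subst h'; rw [(vec_tail_zero i hk).2]; ring
    · rw [hz i h h']; ring

lemma mem_gmap (x : Fin 8 → ℚ) (j k : Fin 8) (hj : 3 ≤ (j : ℕ)) (hlt : j < k)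
    (hxj : x j = 1 ∨ x j = -1) (hxk : x k = 1 ∨ x k = -1)
    (hz : ∀ i, i ≠ j → i ≠ k → x i = 0) : x ∈ deltaFinset := by
  have hne : k ≠ j := (Fin.ne_of_lt hlt).symm
  have hval : ∀ (bj bk : Bool), sgnq bj = x j → sgnq bk = x k →
      x ∈ deltaFinset := by
    intro bj bk hbj hbk
    refine Finset.mem_image.mpr ⟨(j, k, bj, bk), Finset.mem_filter.mpr
      ⟨Finset.mem_univ _, hj, hlt⟩, ?_⟩
    funext i
    simp only [gmap]
    by_cases hij : i = j
    · subst hij; rw [if_pos rfl]; exact hbj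
    by_cases hik : i = k
    · subst hik; rw [if_neg hne, if_pos rfl]; exact hbk
    · rw [if_neg hij, if_neg hik, hz i hij hik]
  rcases hxj with h | h <;> rcases hxk with h' | h'
  · exact hval true true (by rw [h]; rfl) (by rw [h']; rfl)
  · exact hval true false (by rw [h]; rfl) (by rw [h']; rfl)
  · exact hval false true (by rw [h]; rfl) (by rw [h']; rfl)
  · exact hval false false (by rw [h]; rfl) (by rw [h']; rfl)

lemma delta_eq_finset : deltaTail5 = ↑deltaFinset := by
  ext x
  constructor
  · rintro ⟨j, k, hj, hk, hjk, hxj, hxk, hz⟩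
    rcases lt_or_gt_of_ne hjk with hlt | hlt
    · exact mem_gmap x j k hj hlt hxj hxk hz
    · exact mem_gmap x k j hk hlt hxk hxj (fun i h h' => hz i h' h)
  · intro hx
    obtain ⟨⟨j, k, bj, bk⟩, hmem, rfl⟩ := Finset.mem_image.mp hx
    obtain ⟨-, hj, hlt⟩ := Finset.mem_filter.mp hmem
    have hj' : 3 ≤ (j : ℕ) := hj
    have hlt' : j < k := hlt
    have hne : j ≠ k := Fin.ne_of_lt hlt'
    have hk : 3 ≤ (k : ℕ) := by
      have := (Fin.lt_def.mp hlt')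
      omega
    refine ⟨j, k, hj', hk, hne, ?_, ?_, ?_⟩
    · cases bj <;> simp [gmap, sgnq]
    · cases bk <;> simp [gmap, sgnq, Ne.symm hne]
    · intro i hij hik
      simp [gmap, hij, hik]

lemma delta_card : deltaFinset.card = 40 := by decide

/-- In `E₈`, the vectors `v₁ = (1,-1,0,…,0)` and `v₂ = (0,1,3,0,…,0)` span a
sublattice with Gram matrix `[[-2,1],[1,-10]]`, and the roots of `E₈`
orthogonal to both are exactly the 40 vectors `δ_{±i,±j}` with
`4 ≤ i < j ≤ 8`. -/
theorem e8_sublattice_gram_neg2_1_1_neg10_and_orthogonal_roots :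
    (IsE8 ![1, -1, 0, 0, 0, 0, 0, 0] ∧ IsE8 ![0, 1, 3, 0, 0, 0, 0, 0]) ∧
    e8bil ![1, -1, 0, 0, 0, 0, 0, 0] ![1, -1, 0, 0, 0, 0, 0, 0] = -2 ∧
    e8bil ![1, -1, 0, 0, 0, 0, 0, 0] ![0, 1, 3, 0, 0, 0, 0, 0] = 1 ∧
    e8bil ![0, 1, 3, 0, 0, 0, 0, 0] ![0, 1, 3, 0, 0, 0, 0, 0] = -10 ∧
    {x : Fin 8 → ℚ | IsE8Root x ∧
        e8bil x ![1, -1, 0, 0, 0, 0, 0, 0] = 0 ∧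
        e8bil x ![0, 1, 3, 0, 0, 0, 0, 0] = 0} = deltaTail5 ∧
    deltaTail5.ncard = 40 := by
  refine ⟨⟨⟨Or.inl ?_, ⟨0, ?_⟩⟩, ⟨Or.inl ?_, ⟨2, ?_⟩⟩⟩, ?_, ?_, ?_, ?_, ?_⟩
  · intro i
    fin_cases i
    · exact ⟨1, by norm_num⟩
    · exact ⟨-1, by norm_num⟩
    all_goals exact ⟨0, show (0:ℚ) = ((0:ℤ):ℚ) by norm_num⟩
  · norm_num [Fin.sum_univ_succ]
  · intro i
    fin_cases i
    · exact ⟨0, by norm_num⟩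
    · exact ⟨1, by norm_num⟩
    · exact ⟨3, show (3:ℚ) = ((3:ℤ):ℚ) by norm_num⟩
    all_goals exact ⟨0, show (0:ℚ) = ((0:ℤ):ℚ) by norm_num⟩
  · norm_num [Fin.sum_univ_succ]
  · norm_num [e8bil, Fin.sum_univ_succ]
  · norm_num [e8bil, Fin.sum_univ_succ]
  · norm_num [e8bil, Fin.sum_univ_succ]
  · ext x
    simp only [Set.mem_setOf_eq]
    constructor
    · rintro ⟨⟨hE, hn⟩, h1, h2⟩
      exact forward x hE hn h1 h2
    · intro h
      exact backward x h
  · rw [delta_eq_finset, Set.ncard_coe_finset, delta_card]
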